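/- Let 1/2 < s̄ ≤ 1 and 0 < ε < s̄ − 1/2. Then there exists a neighborhood U of (s̄, 1−s̄², 0, 0, 0) in ℝ⁵ such that every vacuum or inflationary solution Γ of the Bianchi class B system with (Σ₊, Σ̃, Δ, Ã, N₊)(τ₀) ∈ U for some τ₀ ∈ ℝ converges, as τ → −∞, to a point (s, 1−s², 0, 0, 0) of the Kasner parabola with |s − s̄| < ε. -/

import Mathlib

open Real Filter Topology MeasureTheory

noncomputable def NT (κ : ℝ) (Ap Np : ℝ → ℝ) (τ : ℝ) : ℝ :=
  (1/3) * ((Np τ)^2 - κ * Ap τ)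

noncomputable def qF (γ κ : ℝ) (Sp St Ap Np : ℝ → ℝ) (τ : ℝ) : ℝ :=
  (3/2)*(2-γ)*((Sp τ)^2 + St τ) + (1/2)*(3*γ-2)*(1 - Ap τ - NT κ Ap Np τ)

noncomputable def OmF (κ : ℝ) (Sp St Ap Np : ℝ → ℝ) (τ : ℝ) : ℝ :=
  1 - (Sp τ)^2 - St τ - Ap τ - NT κ Ap Np τ

/-- A solution of the Bianchi class B system in expansion-normalised variables. -/
structure BianchiB (γ κ : ℝ) (Sp St Dl Ap Np : ℝ → ℝ) : Prop where
  hγ : γ ∈ Set.Icc (0:ℝ) 2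
  diff_Sp : Differentiable ℝ Sp
  diff_St : Differentiable ℝ St
  diff_Dl : Differentiable ℝ Dl
  diff_Ap : Differentiable ℝ Ap
  diff_Np : Differentiable ℝ Np
  ev_Sp : ∀ τ, deriv Sp τ = (qF γ κ Sp St Ap Np τ - 2) * Sp τ - 2 * NT κ Ap Np τ
  ev_St : ∀ τ, deriv St τ =
    2*(qF γ κ Sp St Ap Np τ - 2) * St τ - 4 * Sp τ * Ap τ - 4 * Dl τ * Np τ
  ev_Dl : ∀ τ, deriv Dl τ =
    2*(qF γ κ Sp St Ap Np τ + Sp τ - 1) * Dl τ + 2*(St τ - NT κ Ap Np τ) * Np τ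
  ev_Ap : ∀ τ, deriv Ap τ = 2*(qF γ κ Sp St Ap Np τ + 2*Sp τ) * Ap τ
  ev_Np : ∀ τ, deriv Np τ = (qF γ κ Sp St Ap Np τ + 2*Sp τ) * Np τ + 6 * Dl τ
  con_main : ∀ τ, St τ * NT κ Ap Np τ - (Dl τ)^2 - (Sp τ)^2 * Ap τ = 0
  con_St : ∀ τ, 0 ≤ St τ
  con_Ap : ∀ τ, 0 ≤ Ap τ
  con_NT : ∀ τ, 0 ≤ NT κ Ap Np τ
  con_sum : ∀ τ, (Sp τ)^2 + St τ + Ap τ + NT κ Ap Np τ ≤ 1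

def Vacuum (κ : ℝ) (Sp St Ap Np : ℝ → ℝ) : Prop :=
  ∀ τ, OmF κ Sp St Ap Np τ = 0

def Inflationary (γ κ : ℝ) (Sp St Ap Np : ℝ → ℝ) : Prop :=
  (∀ τ, 0 < OmF κ Sp St Ap Np τ) ∧ γ ∈ Set.Ico (0:ℝ) (2/3)

def traj (Sp St Dl Ap Np : ℝ → ℝ) (τ : ℝ) : ℝ × ℝ × ℝ × ℝ × ℝ :=
  (Sp τ, St τ, Dl τ, Ap τ, Np τ)

def AlphaLimitPt (Sp St Dl Ap Np : ℝ → ℝ) (p : ℝ × ℝ × ℝ × ℝ × ℝ) : Prop :=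
  ∃ t : ℕ → ℝ, Tendsto t atTop atBot ∧
    Tendsto (fun n => traj Sp St Dl Ap Np (t n)) atTop (𝓝 p)

def Kasner : Set (ℝ × ℝ × ℝ × ℝ × ℝ) :=
  {p | ∃ s, s ∈ Set.Icc (-1:ℝ) 1 ∧ p = (s, 1 - s^2, 0, 0, 0)}

def PlaneWave (κ : ℝ) : Set (ℝ × ℝ × ℝ × ℝ × ℝ) :=
  {p | ∃ s n : ℝ, -1 < s ∧ n^2 = (1+s)*(κ*(1+s) - 3*s) ∧ p = (s, -s*(1+s), 0, (1+s)^2, n)}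

def IsConstSol (Sp St Dl Ap Np : ℝ → ℝ) : Prop :=
  ∀ τ, traj Sp St Dl Ap Np τ = traj Sp St Dl Ap Np 0

/-- `BigO f a` : `f = O(e^{a τ})` as `τ → −∞`. -/
def BigO (f : ℝ → ℝ) (a : ℝ) : Prop :=
  ∃ C > 0, ∃ τ₀ : ℝ, ∀ τ ≤ τ₀, |f τ| ≤ C * Real.exp (a * τ)

open scoped Classical in
noncomputable def PiVal (γ s : ℝ) (vac : Prop) : ℝ :=
  if vac then 4 + 4*s else min (6 - 3*γ) (4 + 4*s)

open scoped Classical in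
noncomputable def PiBarVal (γ s : ℝ) (vac : Prop) : ℝ :=
  if vac then 4 + 4*s - 4*Real.sqrt (3*(1-s^2))
  else min (6 - 3*γ) (4 + 4*s - 4*Real.sqrt (3*(1-s^2)))


set_option maxHeartbeats 1000000

section AuxLemmas
open Real Filter Topology Set

lemma cont_induction {F : ℝ → ℝ} (hF : Continuous F) (τ₀ ρ : ℝ) (hρ : 0 < ρ)
    (h0 : F τ₀ ≤ -ρ)
    (himp : ∀ m ≤ τ₀, (∀ σ ∈ Icc m τ₀, F σ ≤ 0) → (∀ σ ∈ Icc m τ₀, F σ ≤ -ρ)) :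
    ∀ τ ≤ τ₀, F τ ≤ -ρ := by
  intro τ₁ hτ₁
  set B : Set ℝ := {τ | τ ∈ Icc τ₁ τ₀ ∧ ∀ σ ∈ Icc τ τ₀, F σ ≤ 0} with hB
  have hτ₀B : τ₀ ∈ B := by
    refine ⟨⟨hτ₁, le_refl _⟩, ?_⟩
    intro σ hσ
    have : σ = τ₀ := le_antisymm hσ.2 hσ.1
    rw [this]; linarith
  have hne : B.Nonempty := ⟨τ₀, hτ₀B⟩
  have hbdd : BddBelow B := ⟨τ₁, fun x hx => hx.1.1⟩
  set m := sInf B with hm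
  have hmτ₁ : τ₁ ≤ m := le_csInf hne (fun x hx => hx.1.1)
  have hmτ₀ : m ≤ τ₀ := csInf_le hbdd hτ₀B
  have hIoc : ∀ σ ∈ Ioc m τ₀, F σ ≤ 0 := by
    intro σ hσ
    obtain ⟨a, haB, ha⟩ := exists_lt_of_csInf_lt hne hσ.1
    exact haB.2 σ ⟨ha.le, hσ.2⟩
  have hmB : ∀ σ ∈ Icc m τ₀, F σ ≤ 0 := by
    intro σ hσ
    rcases eq_or_lt_of_le hσ.1 with h | h
    · rw [← h]
      rw [← h] at hσ
      rcases eq_or_lt_of_le hσ.2 with h2 | h2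
      · rw [h2]; linarith
      · by_contra hpos
        push_neg at hpos
        have hopen : IsOpen {x | 0 < F x} := isOpen_lt continuous_const hF
        obtain ⟨δ, hδ, hball⟩ := Metric.isOpen_iff.mp hopen m hpos
        set σ' := min (m + δ/2) τ₀ with hσ'
        have h1 : m < σ' := lt_min (by linarith) h2
        have h2' : σ' ≤ τ₀ := min_le_right _ _
        have h3 : F σ' ≤ 0 := hIoc σ' ⟨h1, h2'⟩
        have h4 : σ' ∈ Metric.ball m δ := by
          rw [Metric.mem_ball, Real.dist_eq, abs_lt]
          constructor
          · linarith
          · have : σ' ≤ m + δ/2 := min_le_left _ _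
            linarith
        have := hball h4
        simp only [Set.mem_setOf_eq] at this
        linarith
    · exact hIoc σ ⟨h, hσ.2⟩
  have hstrict : ∀ σ ∈ Icc m τ₀, F σ ≤ -ρ := himp m hmτ₀ hmB
  have hmeq : m = τ₁ := by
    by_contra hne'
    have hlt : τ₁ < m := lt_of_le_of_ne hmτ₁ (Ne.symm hne')
    have hFm : F m < 0 := lt_of_le_of_lt (hstrict m ⟨le_refl _, hmτ₀⟩) (by linarith)
    have hopen : IsOpen {x | F x < 0} := isOpen_lt hF continuous_const
    obtain ⟨δ, hδ, hball⟩ := Metric.isOpen_iff.mp hopen m hFm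
    set m' := max τ₁ (m - δ/2) with hm'
    have hm'lt : m' < m := max_lt hlt (by linarith)
    have hm'B : m' ∈ B := by
      refine ⟨⟨le_max_left _ _, le_trans hm'lt.le hmτ₀⟩, ?_⟩
      intro σ hσ
      rcases le_or_gt m σ with h | h
      · exact hmB σ ⟨h, hσ.2⟩
      · have h1 : m - δ/2 ≤ σ := le_trans (le_max_right _ _) hσ.1
        have h2 : σ ∈ Metric.ball m δ := by
          rw [Metric.mem_ball, Real.dist_eq, abs_lt]
          constructor <;> linarith
        have := hball h2
        simp only [Set.mem_setOf_eq] at this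
        linarith
    have := csInf_le hbdd hm'B
    rw [← hm] at this
    linarith
  exact hstrict τ₁ ⟨hmeq.le, hτ₁⟩

lemma my_sqrt_add_le (a b : ℝ) (ha : 0 ≤ a) (hb : 0 ≤ b) :
    Real.sqrt (a + b) ≤ Real.sqrt a + Real.sqrt b := by
  calc Real.sqrt (a+b) ≤ Real.sqrt ((Real.sqrt a + Real.sqrt b)^2) := by
        apply Real.sqrt_le_sqrt
        nlinarith [Real.sq_sqrt ha, Real.sq_sqrt hb, Real.sqrt_nonneg a, Real.sqrt_nonneg b,
          mul_nonneg (Real.sqrt_nonneg a) (Real.sqrt_nonneg b)]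
    _ = Real.sqrt a + Real.sqrt b := Real.sqrt_sq (by positivity)

end AuxLemmas

open Real Filter Topology

lemma g_hasDeriv (γ κ c : ℝ) {Sp St Dl Ap Np : ℝ → ℝ} (bb : BianchiB γ κ Sp St Dl Ap Np) (τ : ℝ) :
    HasDerivAt (fun t => c * Ap t + NT κ Ap Np t + OmF κ Sp St Ap Np t)
      (2*(qF γ κ Sp St Ap Np τ + 2*Sp τ)*(c*Ap τ + NT κ Ap Np τ) + 4*Dl τ*Np τ
        + (2*qF γ κ Sp St Ap Np τ - 3*γ + 2)*(OmF κ Sp St Ap Np τ)) τ := by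
  have hA := (bb.diff_Ap τ).hasDerivAt
  have hN := (bb.diff_Np τ).hasDerivAt
  have hS := (bb.diff_Sp τ).hasDerivAt
  have hT := (bb.diff_St τ).hasDerivAt
  have hNp2 : HasDerivAt (fun t => (Np t)^2) (2*Np τ*deriv Np τ) τ := by
    simpa [Pi.pow_def] using hN.pow 2
  have hSp2 : HasDerivAt (fun t => (Sp t)^2) (2*Sp τ*deriv Sp τ) τ := by
    simpa [Pi.pow_def] using hS.pow 2
  have hNT : HasDerivAt (fun t => (1/3 : ℝ)*((Np t)^2 - κ*Ap t))
      ((1/3)*(2*Np τ*deriv Np τ - κ*deriv Ap τ)) τ :=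
    ((hNp2.sub (hA.const_mul κ)).const_mul (1/3))
  have hOm : HasDerivAt (fun t => 1 - (Sp t)^2 - St t - Ap t - (1/3 : ℝ)*((Np t)^2 - κ*Ap t))
      (0 - 2*Sp τ*deriv Sp τ - deriv St τ - deriv Ap τ
        - (1/3)*(2*Np τ*deriv Np τ - κ*deriv Ap τ)) τ :=
    (((((hasDerivAt_const τ (1:ℝ)).sub hSp2).sub hT).sub hA).sub hNT)
  have hg : HasDerivAt (fun t => c*Ap t + (1/3:ℝ)*((Np t)^2 - κ*Ap t)
      + (1 - (Sp t)^2 - St t - Ap t - (1/3:ℝ)*((Np t)^2 - κ*Ap t)))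
      (c*deriv Ap τ + (1/3)*(2*Np τ*deriv Np τ - κ*deriv Ap τ)
        + (0 - 2*Sp τ*deriv Sp τ - deriv St τ - deriv Ap τ
          - (1/3)*(2*Np τ*deriv Np τ - κ*deriv Ap τ))) τ :=
    ((hA.const_mul c).add hNT).add hOm
  simp only [NT, OmF]
  convert hg using 1
  rw [bb.ev_Sp, bb.ev_St, bb.ev_Ap, bb.ev_Np]
  simp only [qF, NT, OmF]
  ring


theorem stmt19 (γ κ sb ε : ℝ)
    (hγ : γ ∈ Set.Icc (0:ℝ) 2)
    (hsb : 1/2 < sb ∧ sb ≤ 1) (hε : 0 < ε ∧ ε < sb - 1/2) :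
    ∃ U ∈ 𝓝 ((sb, 1 - sb^2, 0, 0, 0) : ℝ × ℝ × ℝ × ℝ × ℝ),
      ∀ Sp St Dl Ap Np : ℝ → ℝ, BianchiB γ κ Sp St Dl Ap Np →
        (Vacuum κ Sp St Ap Np ∨ Inflationary γ κ Sp St Ap Np) →
        (∃ τ₀ : ℝ, traj Sp St Dl Ap Np τ₀ ∈ U) →
        ∃ s ∈ Set.Icc (-1:ℝ) 1, |s - sb| < ε ∧
          Tendsto (traj Sp St Dl Ap Np) atBot
            (𝓝 ((s, 1 - s^2, 0, 0, 0) : ℝ × ℝ × ℝ × ℝ × ℝ)) := by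
  obtain ⟨hsb1, hsb2⟩ := hsb
  obtain ⟨hε0, hε1⟩ := hε
  obtain ⟨hγ0, hγ2⟩ := hγ
  have h1s : (0:ℝ) ≤ 3*(1-sb^2) := by nlinarith
  obtain ⟨lam0, hlam0def⟩ : ∃ x:ℝ, x = 4 + 4*sb - 4*Real.sqrt (3*(1-sb^2)) := ⟨_, rfl⟩
  have hsqrt_lt : Real.sqrt (3*(1-sb^2)) < 1 + sb := by
    rw [Real.sqrt_lt' (by linarith)]
    nlinarith
  have hlam0pos : 0 < lam0 := by rw [hlam0def]; nlinarith
  have hlam0le : lam0 ≤ 8 := by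
    have := Real.sqrt_nonneg (3*(1-sb^2)); rw [hlam0def]; nlinarith
  obtain ⟨δ₁, hδ₁def⟩ : ∃ x:ℝ, x = min (min (ε/2) (1/4)) (min (lam0/32) (lam0^2/1536)) := ⟨_, rfl⟩
  have hδ₁pos : 0 < δ₁ := by
    rw [hδ₁def]
    exact lt_min (lt_min (by linarith) (by norm_num)) (lt_min (by positivity) (by positivity))
  have hδ₁ε : δ₁ ≤ ε/2 := hδ₁def ▸ le_trans (min_le_left _ _) (min_le_left _ _)
  have hδ₁14 : δ₁ ≤ 1/4 := hδ₁def ▸ le_trans (min_le_left _ _) (min_le_right _ _)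
  have hδ₁a : δ₁ ≤ lam0/32 := hδ₁def ▸ le_trans (min_le_right _ _) (min_le_left _ _)
  have hδ₁b : δ₁ ≤ lam0^2/1536 := hδ₁def ▸ le_trans (min_le_right _ _) (min_le_right _ _)
  clear hδ₁def
  obtain ⟨δ₂, hδ₂def⟩ : ∃ x:ℝ, x = min (lam0/64) (1/8) := ⟨_, rfl⟩
  have hδ₂pos : 0 < δ₂ := by rw [hδ₂def]; exact lt_min (by positivity) (by norm_num)
  have hδ₂a : δ₂ ≤ lam0/64 := hδ₂def ▸ min_le_left _ _
  have hδ₂b : δ₂ ≤ 1/8 := hδ₂def ▸ min_le_right _ _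
  clear hδ₂def
  have hsbδ₁ : 1/4 ≤ sb - δ₁ := by linarith
  obtain ⟨S, hSdef⟩ : ∃ x:ℝ, x = 1 - (sb-δ₁)^2 := ⟨_, rfl⟩
  have hSpos : 0 < S := by rw [hSdef]; nlinarith
  obtain ⟨μ, hμdef⟩ : ∃ x:ℝ, x = Real.sqrt 3 / Real.sqrt S := ⟨_, rfl⟩
  obtain ⟨β, hβdef⟩ : ∃ x:ℝ, x = Real.sqrt S / Real.sqrt 3 := ⟨_, rfl⟩
  have hsqrt3pos : (0:ℝ) < Real.sqrt 3 := Real.sqrt_pos.2 (by norm_num)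
  have hsqrtSpos : 0 < Real.sqrt S := Real.sqrt_pos.2 hSpos
  have hSS : Real.sqrt S * Real.sqrt S = S := Real.mul_self_sqrt hSpos.le
  have h33 : Real.sqrt 3 * Real.sqrt 3 = 3 := Real.mul_self_sqrt (by norm_num)
  have hμpos : 0 < μ := hμdef ▸ div_pos hsqrt3pos hsqrtSpos
  have hβpos : 0 < β := hβdef ▸ div_pos hsqrtSpos hsqrt3pos
  have hμβ : μ * β = 1 := by rw [hμdef, hβdef]; field_simp
  have hμS : μ * S = Real.sqrt 3 * Real.sqrt S := by
    rw [hμdef, div_mul_eq_mul_div, div_eq_iff hsqrtSpos.ne', mul_assoc, hSS]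
  have h3β : 3 * β = Real.sqrt 3 * Real.sqrt S := by
    rw [hβdef, mul_div_assoc']; rw [div_eq_iff hsqrt3pos.ne']
    linear_combination (-Real.sqrt S) * h33
  have hsqrtS : Real.sqrt 3 * Real.sqrt S ≤ Real.sqrt (3*(1-sb^2)) + lam0/16 := by
    rw [← Real.sqrt_mul (by norm_num : (0:ℝ) ≤ 3)]
    have h3S : 3*S ≤ 3*(1-sb^2) + 6*δ₁ := by rw [hSdef]; nlinarith
    calc Real.sqrt (3*S) ≤ Real.sqrt (3*(1-sb^2) + 6*δ₁) := Real.sqrt_le_sqrt h3S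
      _ ≤ Real.sqrt (3*(1-sb^2)) + Real.sqrt (6*δ₁) := my_sqrt_add_le _ _ h1s (by positivity)
      _ ≤ Real.sqrt (3*(1-sb^2)) + lam0/16 := by
          have h6 : 6*δ₁ ≤ (lam0/16)^2 := by nlinarith
          have : Real.sqrt (6*δ₁) ≤ lam0/16 :=
            le_trans (Real.sqrt_le_sqrt h6) (le_of_eq (Real.sqrt_sq (by positivity)))
          linarith
  have hcross_coef : 4*(Real.sqrt 3 * Real.sqrt S) ≤ 4 + 4*sb - lam0 + lam0/4 := by
    rw [hlam0def]; nlinarith [hsqrtS]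
  obtain ⟨c, hcdef⟩ : ∃ x:ℝ, x = max 1 (|κ| * β) := ⟨_, rfl⟩
  have hc1 : 1 ≤ c := hcdef ▸ le_max_left _ _
  have hc0 : 0 < c := lt_of_lt_of_le one_pos hc1
  have hcκ : |κ| * β ≤ c := hcdef ▸ le_max_right _ _
  clear hcdef
  obtain ⟨lam, hlamdef⟩ : ∃ x:ℝ, x = min (lam0/2) 2 := ⟨_, rfl⟩
  have hlampos : 0 < lam := by rw [hlamdef]; exact lt_min (by positivity) (by norm_num)
  have hlam2 : lam ≤ 2 := hlamdef ▸ min_le_right _ _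
  have hlamlam0 : lam ≤ lam0/2 := hlamdef ▸ min_le_left _ _
  clear hlamdef
  obtain ⟨η, hηdef⟩ : ∃ x:ℝ, x = min (δ₂/2) (lam*δ₁/48) := ⟨_, rfl⟩
  have hηpos : 0 < η := by rw [hηdef]; exact lt_min (by positivity) (by positivity)
  have hη1 : η ≤ δ₂/2 := hηdef ▸ min_le_left _ _
  have hη2 : η ≤ lam*δ₁/48 := hηdef ▸ min_le_right _ _
  clear hηdef
  obtain ⟨ρ, hρdef⟩ : ∃ x:ℝ, x = min (δ₁/4) (δ₂/2) := ⟨_, rfl⟩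
  have hρpos : 0 < ρ := by rw [hρdef]; exact lt_min (by positivity) (by positivity)
  have hρa : ρ ≤ δ₁/4 := hρdef ▸ min_le_left _ _
  have hρb : ρ ≤ δ₂/2 := hρdef ▸ min_le_right _ _
  clear hρdef
  refine ⟨{p : ℝ × ℝ × ℝ × ℝ × ℝ | |p.1 - sb| < δ₁/2 ∧
      c * p.2.2.2.1 + (1/3) * (p.2.2.2.2^2 - κ * p.2.2.2.1) +
        (1 - p.1^2 - p.2.1 - p.2.2.2.1 - (1/3) * (p.2.2.2.2^2 - κ * p.2.2.2.1)) < η}, ?_, ?_⟩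
  · apply IsOpen.mem_nhds
    · have hone : Continuous fun p : ℝ × ℝ × ℝ × ℝ × ℝ => |p.1 - sb| :=
        (continuous_fst.sub continuous_const).abs
      have htwo : Continuous fun p : ℝ × ℝ × ℝ × ℝ × ℝ =>
          c * p.2.2.2.1 + (1/3) * (p.2.2.2.2^2 - κ * p.2.2.2.1) +
          (1 - p.1^2 - p.2.1 - p.2.2.2.1 - (1/3) * (p.2.2.2.2^2 - κ * p.2.2.2.1)) := by fun_prop
      exact (isOpen_lt hone continuous_const).inter (isOpen_lt htwo continuous_const)
    · simp only [Set.mem_setOf_eq]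
      constructor
      · simpa using (by positivity : 0 < δ₁/2)
      · norm_num
        exact hηpos
  rintro Sp St Dl Ap Np bb hvi ⟨τ₀, hτ₀U⟩
  simp only [traj, Set.mem_setOf_eq] at hτ₀U
  obtain ⟨hU1, hU2⟩ := hτ₀U
  have hΩ0 : ∀ τ, 0 ≤ OmF κ Sp St Ap Np τ := by
    rcases hvi with hvac | hinf
    · exact fun τ => (hvac τ).ge
    · exact fun τ => (hinf.1 τ).le
  obtain ⟨g, hgdef⟩ : ∃ x : ℝ → ℝ,
      x = fun τ => c * Ap τ + NT κ Ap Np τ + OmF κ Sp St Ap Np τ := ⟨_, rfl⟩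
  have hgτ : ∀ τ, g τ = c * Ap τ + NT κ Ap Np τ + OmF κ Sp St Ap Np τ := fun τ => by rw [hgdef]
  have hgHD : ∀ x, HasDerivAt g
      (2*(qF γ κ Sp St Ap Np x + 2*Sp x)*(c*Ap x + NT κ Ap Np x) + 4*Dl x*Np x
        + (2*qF γ κ Sp St Ap Np x - 3*γ + 2)*(OmF κ Sp St Ap Np x)) x := by
    rw [hgdef]; exact fun x => g_hasDeriv γ κ c bb x
  have hgdiff : Differentiable ℝ g := fun x => (hgHD x).differentiableAt
  have hgcont : Continuous g := hgdiff.continuous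
  have hSpcont : Continuous Sp := bb.diff_Sp.continuous
  have hgτ₀ : g τ₀ < η := by
    rw [hgτ]; simpa only [NT, OmF] using hU2
  have hg0 : ∀ τ, 0 ≤ g τ := by
    intro τ; rw [hgτ]
    have := mul_nonneg hc0.le (bb.con_Ap τ)
    linarith [bb.con_NT τ, hΩ0 τ]
  have hWg : ∀ τ, Ap τ + NT κ Ap Np τ + OmF κ Sp St Ap Np τ ≤ g τ := by
    intro τ; rw [hgτ]
    have : Ap τ ≤ c * Ap τ := le_mul_of_one_le_left (bb.con_Ap τ) hc1
    linarith
  have hAg : ∀ τ, Ap τ ≤ g τ := by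
    intro τ; have := hWg τ; have := bb.con_NT τ; have := hΩ0 τ; linarith
  have hNg : ∀ τ, NT κ Ap Np τ ≤ g τ := by
    intro τ; have := hWg τ; have := bb.con_Ap τ; have := hΩ0 τ; linarith
  have hOg : ∀ τ, OmF κ Sp St Ap Np τ ≤ g τ := by
    intro τ; have := hWg τ; have := bb.con_Ap τ; have := bb.con_NT τ; linarith
  have hq2 : ∀ τ, qF γ κ Sp St Ap Np τ - 2
      = -2*(Ap τ + NT κ Ap Np τ + OmF κ Sp St Ap Np τ)
        + (3*γ-2)*(OmF κ Sp St Ap Np τ)/2 := by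
    intro τ; simp only [qF, OmF, NT]; ring
  have hqbounds : ∀ τ, -(3*g τ) ≤ qF γ κ Sp St Ap Np τ - 2 ∧ qF γ κ Sp St Ap Np τ - 2 ≤ 2*g τ := by
    intro τ
    have h1 := hq2 τ
    have h2 := hWg τ
    have h5 := hΩ0 τ
    have h6 := hOg τ
    have h7 : 0 ≤ 3*γ*(OmF κ Sp St Ap Np τ) := mul_nonneg (by linarith) h5
    have h8 : 3*γ*(OmF κ Sp St Ap Np τ) ≤ 6*(OmF κ Sp St Ap Np τ) := by
      have := mul_le_mul_of_nonneg_right (show 3*γ ≤ 6 by linarith) h5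
      linarith
    have h9 : 0 ≤ Ap τ + NT κ Ap Np τ + OmF κ Sp St Ap Np τ := by
      have := bb.con_Ap τ; have := bb.con_NT τ; linarith
    constructor <;> linarith
  have hSp11 : ∀ τ, -1 ≤ Sp τ ∧ Sp τ ≤ 1 := by
    intro τ
    have h := bb.con_sum τ
    have h2 := bb.con_St τ; have h3 := bb.con_Ap τ; have h4 := bb.con_NT τ
    have hsq : (Sp τ)^2 ≤ 1 := by linarith
    exact abs_le.1 ((sq_le_one_iff_abs_le_one (Sp τ)).1 hsq)
  have hSpD : ∀ τ, |deriv Sp τ| ≤ 6 * g τ := by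
    intro τ
    have h1 := hqbounds τ
    have h2 := hSp11 τ
    have hN0 := bb.con_NT τ
    have hNg' := hNg τ
    have hq3 : |qF γ κ Sp St Ap Np τ - 2| ≤ 3 * g τ :=
      abs_le.2 ⟨by linarith [h1.1], by linarith [h1.2, hg0 τ]⟩
    have hsp : |Sp τ| ≤ 1 := abs_le.2 h2
    rw [bb.ev_Sp τ]
    have e1 : |(qF γ κ Sp St Ap Np τ - 2) * Sp τ| ≤ 3 * g τ := by
      rw [abs_mul]
      calc |qF γ κ Sp St Ap Np τ - 2| * |Sp τ| ≤ (3 * g τ) * 1 :=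
            mul_le_mul hq3 hsp (abs_nonneg _) (by linarith [hg0 τ])
        _ = 3 * g τ := by ring
    have e2 : |2 * NT κ Ap Np τ| ≤ 2 * g τ := by
      rw [abs_of_nonneg (by linarith)]; linarith
    calc |(qF γ κ Sp St Ap Np τ - 2) * Sp τ - 2 * NT κ Ap Np τ|
        ≤ |(qF γ κ Sp St Ap Np τ - 2) * Sp τ| + |2 * NT κ Ap Np τ| := abs_sub _ _
      _ ≤ 6 * g τ := by linarith
  have hkey : ∀ x, |Sp x - sb| ≤ δ₁ → g x ≤ δ₂ → lam * g x ≤ deriv g x := by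
    intro x hb1 hb2
    rw [(hgHD x).deriv]
    have hA0 := bb.con_Ap x
    have hN0 := bb.con_NT x
    have hO0 := hΩ0 x
    have hT0 := bb.con_St x
    have hOd : OmF κ Sp St Ap Np x ≤ δ₂ := le_trans (hOg x) hb2
    have hWd : Ap x + NT κ Ap Np x + OmF κ Sp St Ap Np x ≤ δ₂ := le_trans (hWg x) hb2
    have hSplb : sb - δ₁ ≤ Sp x := by
      have := (abs_le.1 hb1).1; linarith
    have hStS : St x ≤ S := by
      have hOdef : OmF κ Sp St Ap Np x = 1 - (Sp x)^2 - St x - Ap x - NT κ Ap Np x := rfl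
      have hsq : (sb - δ₁)^2 ≤ (Sp x)^2 := by
        have h2 : 0 ≤ Sp x + (sb - δ₁) := by linarith
        have h3 := mul_nonneg (sub_nonneg.2 hSplb) h2
        linarith [h3]
      rw [hSdef]; linarith
    have hqlb : 2 - 3*δ₂ ≤ qF γ κ Sp St Ap Np x := by
      have h1 := hq2 x
      have h3 : 0 ≤ 3*γ*(OmF κ Sp St Ap Np x) := mul_nonneg (by linarith) hO0
      linarith
    have hKlb : 4 + 4*sb - 6*δ₂ - 4*δ₁ ≤ 2*(qF γ κ Sp St Ap Np x + 2*Sp x) := by linarith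
    have hcoefN : lam ≤ 2*(qF γ κ Sp St Ap Np x + 2*Sp x) - 2*μ*(St x) - 6*β := by
      have h1 : μ*(St x) ≤ μ*S := mul_le_mul_of_nonneg_left hStS hμpos.le
      linarith [hμS, h3β, hcross_coef, hlamlam0, hδ₂a, hδ₁a, hlam0pos]
    have hcoefA : lam * c ≤ 2*(qF γ κ Sp St Ap Np x + 2*Sp x) * c - 2*(|κ| * β) := by
      have hK4 : 4 ≤ 2*(qF γ κ Sp St Ap Np x + 2*Sp x) := by linarith [hδ₂a, hδ₁a, hlam0le]
      have h4 : 4 * c ≤ 2*(qF γ κ Sp St Ap Np x + 2*Sp x) * c :=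
        mul_le_mul_of_nonneg_right hK4 hc0.le
      have h5 : lam * c ≤ 2 * c := mul_le_mul_of_nonneg_right hlam2 hc0.le
      linarith [hcκ]
    have hcoefO : lam * OmF κ Sp St Ap Np x ≤ (2*qF γ κ Sp St Ap Np x - 3*γ + 2) * OmF κ Sp St Ap Np x := by
      rcases hvi with hvac | hinf
      · rw [hvac x]; simp
      · have hγlt : γ < 2/3 := hinf.2.2
        have h6 : lam ≤ 2*qF γ κ Sp St Ap Np x - 3*γ + 2 := by linarith [hδ₂b]
        exact mul_le_mul_of_nonneg_right h6 hO0
    have hDl2 : (Dl x)^2 ≤ St x * NT κ Ap Np x := by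
      have h1 := bb.con_main x
      have h2 : 0 ≤ (Sp x)^2 * Ap x := mul_nonneg (sq_nonneg _) hA0
      linarith
    have hNp2le : (Np x)^2 ≤ 3*NT κ Ap Np x + |κ| * Ap x := by
      have h1 : (Np x)^2 = 3*NT κ Ap Np x + κ*Ap x := by simp only [NT]; ring
      have h2 : κ*Ap x ≤ |κ| * Ap x := mul_le_mul_of_nonneg_right (le_abs_self κ) hA0
      linarith
    have hcross : -(2*μ*((Dl x)^2) + 2*β*((Np x)^2)) ≤ 4*Dl x*Np x := by
      have h1 : 0 ≤ 2*(μ*Dl x + Np x)^2 := by positivity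
      have h2 : μ * (2*μ*((Dl x)^2) + 4*Dl x*Np x + 2*β*((Np x)^2)) = 2*(μ*Dl x + Np x)^2 := by
        linear_combination 2*(Np x)^2 * hμβ
      have h3 : 0 ≤ μ * (2*μ*((Dl x)^2) + 4*Dl x*Np x + 2*β*((Np x)^2)) := h2 ▸ h1
      have h4 := nonneg_of_mul_nonneg_right h3 hμpos
      linarith [h4]
    have hcross2 : -(2*μ*(St x * NT κ Ap Np x) + 2*β*(3*NT κ Ap Np x + |κ| * Ap x)) ≤ 4*Dl x*Np x := by
      have d1 : 2*μ*((Dl x)^2) ≤ 2*μ*(St x * NT κ Ap Np x) := by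
        have := mul_le_mul_of_nonneg_left hDl2 (by positivity : (0:ℝ) ≤ 2*μ)
        linarith
      have d2 : 2*β*((Np x)^2) ≤ 2*β*(3*NT κ Ap Np x + |κ| * Ap x) := by
        have := mul_le_mul_of_nonneg_left hNp2le (by positivity : (0:ℝ) ≤ 2*β)
        linarith
      linarith [hcross]
    have m1 : lam * NT κ Ap Np x
        ≤ (2*(qF γ κ Sp St Ap Np x + 2*Sp x) - 2*μ*(St x) - 6*β) * NT κ Ap Np x :=
      mul_le_mul_of_nonneg_right hcoefN hN0
    have m2 : (lam * c) * Ap x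
        ≤ (2*(qF γ κ Sp St Ap Np x + 2*Sp x) * c - 2*(|κ| * β)) * Ap x :=
      mul_le_mul_of_nonneg_right hcoefA hA0
    rw [hgτ x]
    linarith [m1, m2, hcoefO, hcross2]
  have hE : ∀ x : ℝ, HasDerivAt (fun τ => Real.exp (-(lam*τ))) (Real.exp (-(lam*x)) * (-lam)) x := by
    intro x
    have h1 : HasDerivAt (fun τ : ℝ => -(lam*τ)) (-lam) x := by
      simpa [Pi.neg_def] using ((hasDerivAt_id x).const_mul lam).neg
    exact h1.exp
  have hGE : ∀ x : ℝ, HasDerivAt (fun τ => g τ * Real.exp (-(lam*τ)))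
      (deriv g x * Real.exp (-(lam*x)) + g x * (Real.exp (-(lam*x)) * (-lam))) x :=
    fun x => ((hgdiff x).hasDerivAt.mul (hE x))
  have hmono_h : ∀ D : Set ℝ, Convex ℝ D → (∀ x ∈ interior D, |Sp x - sb| ≤ δ₁ ∧ g x ≤ δ₂) →
      MonotoneOn (fun τ => g τ * Real.exp (-(lam*τ))) D := by
    intro D hD hreg
    apply monotoneOn_of_deriv_nonneg hD
    · exact (hgcont.mul (((continuous_const.mul continuous_id).neg).rexp)).continuousOn
    · intro x _
      exact (hGE x).differentiableAt.differentiableWithinAt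
    · intro x hx
      rw [(hGE x).deriv]
      have hb := hreg x hx
      have hk := hkey x hb.1 hb.2
      have he := Real.exp_pos (-(lam*x))
      have h2 := mul_le_mul_of_nonneg_right hk he.le
      linarith [h2]
  have hφHD : ∀ x : ℝ, HasDerivAt (fun τ => Sp τ + (6/lam) * g τ)
      (deriv Sp x + (6/lam) * deriv g x) x :=
    fun x => (bb.diff_Sp x).hasDerivAt.add ((hgdiff x).hasDerivAt.const_mul (6/lam))
  have hφmHD : ∀ x : ℝ, HasDerivAt (fun τ => Sp τ - (6/lam) * g τ)
      (deriv Sp x - (6/lam) * deriv g x) x :=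
    fun x => (bb.diff_Sp x).hasDerivAt.sub ((hgdiff x).hasDerivAt.const_mul (6/lam))
  have hfl : (6/lam) * lam = 6 := by field_simp
  have hmono_φ : ∀ D : Set ℝ, Convex ℝ D → (∀ x ∈ interior D, |Sp x - sb| ≤ δ₁ ∧ g x ≤ δ₂) →
      MonotoneOn (fun τ => Sp τ + (6/lam) * g τ) D := by
    intro D hD hreg
    apply monotoneOn_of_deriv_nonneg hD
    · exact (hSpcont.add (continuous_const.mul hgcont)).continuousOn
    · intro x _
      exact (hφHD x).differentiableAt.differentiableWithinAt
    · intro x hx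
      rw [(hφHD x).deriv]
      have hb := hreg x hx
      have hk := hkey x hb.1 hb.2
      have h1 := (abs_le.1 (hSpD x)).1
      have h2 : (6/lam) * (lam * g x) ≤ (6/lam) * deriv g x :=
        mul_le_mul_of_nonneg_left hk (by positivity)
      have h3 : (6/lam) * (lam * g x) = 6 * g x := by
        rw [← mul_assoc, hfl]
      linarith
  have hanti_φ : ∀ D : Set ℝ, Convex ℝ D → (∀ x ∈ interior D, |Sp x - sb| ≤ δ₁ ∧ g x ≤ δ₂) →
      AntitoneOn (fun τ => Sp τ - (6/lam) * g τ) D := by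
    intro D hD hreg
    apply antitoneOn_of_deriv_nonpos hD
    · exact (hSpcont.sub (continuous_const.mul hgcont)).continuousOn
    · intro x _
      exact (hφmHD x).differentiableAt.differentiableWithinAt
    · intro x hx
      rw [(hφmHD x).deriv]
      have hb := hreg x hx
      have hk := hkey x hb.1 hb.2
      have h1 := (abs_le.1 (hSpD x)).2
      have h2 : (6/lam) * (lam * g x) ≤ (6/lam) * deriv g x :=
        mul_le_mul_of_nonneg_left hk (by positivity)
      have h3 : (6/lam) * (lam * g x) = 6 * g x := by
        rw [← mul_assoc, hfl]
      linarith
  obtain ⟨F, hFdef⟩ : ∃ x : ℝ → ℝ, x = fun τ => max (|Sp τ - sb| - δ₁) (g τ - δ₂) := ⟨_, rfl⟩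
  have hFτ : ∀ τ, F τ = max (|Sp τ - sb| - δ₁) (g τ - δ₂) := fun τ => by rw [hFdef]
  have hFcont : Continuous F := by
    rw [hFdef]
    exact (((hSpcont.sub continuous_const).abs).sub continuous_const).max
      (hgcont.sub continuous_const)
  have hU1' : |Sp τ₀ - sb| < δ₁/2 := hU1
  have h0 : F τ₀ ≤ -ρ := by
    rw [hFτ]
    apply max_le
    · linarith
    · linarith [hgτ₀]
  have himp : ∀ m ≤ τ₀, (∀ σ ∈ Set.Icc m τ₀, F σ ≤ 0) → (∀ σ ∈ Set.Icc m τ₀, F σ ≤ -ρ) := by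
    intro m hm hreg
    have hreg' : ∀ σ ∈ Set.Icc m τ₀, |Sp σ - sb| ≤ δ₁ ∧ g σ ≤ δ₂ := by
      intro σ hσ
      have h := hreg σ hσ
      rw [hFτ] at h
      rw [max_le_iff] at h
      exact ⟨by linarith [h.1], by linarith [h.2]⟩
    have hregI : ∀ x ∈ interior (Set.Icc m τ₀), |Sp x - sb| ≤ δ₁ ∧ g x ≤ δ₂ := by
      intro x hx
      rw [interior_Icc] at hx
      exact hreg' x (Set.Ioo_subset_Icc_self hx)
    have hmh := hmono_h (Set.Icc m τ₀) (convex_Icc _ _) hregI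
    have hmφ := hmono_φ (Set.Icc m τ₀) (convex_Icc _ _) hregI
    have hmφm := hanti_φ (Set.Icc m τ₀) (convex_Icc _ _) hregI
    have hτ₀m : τ₀ ∈ Set.Icc m τ₀ := ⟨hm, le_refl _⟩
    have hgsmall : ∀ σ ∈ Set.Icc m τ₀, g σ ≤ η := by
      intro σ hσ
      have h1 := hmh hσ hτ₀m hσ.2
      simp only at h1
      have e1 : Real.exp (-(lam*τ₀)) ≤ Real.exp (-(lam*σ)) := by
        apply Real.exp_le_exp.2
        have := mul_le_mul_of_nonneg_left hσ.2 hlampos.le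
        linarith
      have e2 := Real.exp_pos (-(lam*σ))
      have e3 : g τ₀ * Real.exp (-(lam*τ₀)) ≤ η * Real.exp (-(lam*σ)) := by
        calc g τ₀ * Real.exp (-(lam*τ₀)) ≤ η * Real.exp (-(lam*τ₀)) :=
              mul_le_mul_of_nonneg_right hgτ₀.le (Real.exp_pos _).le
          _ ≤ η * Real.exp (-(lam*σ)) := mul_le_mul_of_nonneg_left e1 hηpos.le
      exact le_of_mul_le_mul_right (le_trans h1 e3) e2
    have hSpbd : ∀ σ ∈ Set.Icc m τ₀, |Sp σ - sb| ≤ 3*δ₁/4 := by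
      intro σ hσ
      have h1 := hmφ hσ hτ₀m hσ.2
      have h2 := hmφm hσ hτ₀m hσ.2
      simp only at h1 h2
      have h3 : (0:ℝ) ≤ 6/lam := by positivity
      have e0 : 0 ≤ (6/lam) * g σ := mul_nonneg h3 (hg0 σ)
      have e1 : (6/lam) * g τ₀ ≤ δ₁/8 := by
        have e2 : (6/lam) * g τ₀ ≤ (6/lam) * (lam*δ₁/48) :=
          mul_le_mul_of_nonneg_left (le_trans hgτ₀.le hη2) h3
        have heq : (6/lam) * (lam*δ₁/48) = δ₁/8 := by
          field_simp; ring
        linarith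
      have hU2' := abs_lt.1 hU1'
      rw [abs_le]
      constructor
      · linarith [h2, hU2'.1]
      · linarith [h1, hU2'.2]
    intro σ hσ
    rw [hFτ]
    apply max_le
    · linarith [hSpbd σ hσ]
    · linarith [hgsmall σ hσ]
  have hmain := cont_induction hFcont τ₀ ρ hρpos h0 himp
  have hreg2 : ∀ τ ≤ τ₀, |Sp τ - sb| ≤ δ₁ ∧ g τ ≤ δ₂ := by
    intro τ hτ
    have h := hmain τ hτ
    rw [hFτ, max_le_iff] at h
    exact ⟨by linarith [h.1], by linarith [h.2]⟩
  have hregI2 : ∀ x ∈ interior (Set.Iic τ₀), |Sp x - sb| ≤ δ₁ ∧ g x ≤ δ₂ := by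
    intro x hx
    rw [interior_Iic] at hx
    exact hreg2 x (le_of_lt hx)
  have hmh2 := hmono_h (Set.Iic τ₀) (convex_Iic _) hregI2
  have hmφ2 := hmono_φ (Set.Iic τ₀) (convex_Iic _) hregI2
  have hgexp : ∀ τ ≤ τ₀, g τ ≤ η * Real.exp (lam*τ - lam*τ₀) := by
    intro τ hτ
    have h1 := hmh2 (Set.mem_Iic.2 hτ) (Set.mem_Iic.2 (le_refl τ₀)) hτ
    simp only at h1
    have h2 : g τ₀ * Real.exp (-(lam*τ₀)) ≤ η * Real.exp (-(lam*τ₀)) :=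
      mul_le_mul_of_nonneg_right hgτ₀.le (Real.exp_pos _).le
    have e2 := mul_le_mul_of_nonneg_right (le_trans h1 h2) (Real.exp_pos (lam*τ)).le
    calc g τ = g τ * Real.exp (-(lam*τ)) * Real.exp (lam*τ) := by
          rw [mul_assoc, ← Real.exp_add]; simp
      _ ≤ η * Real.exp (-(lam*τ₀)) * Real.exp (lam*τ) := e2
      _ = η * Real.exp (lam*τ - lam*τ₀) := by
          rw [mul_assoc, ← Real.exp_add, show -(lam*τ₀) + lam*τ = lam*τ - lam*τ₀ by ring]
  have hgtend : Tendsto g atBot (𝓝 0) := by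
    apply squeeze_zero' (Eventually.of_forall hg0)
      (eventually_atBot.2 ⟨τ₀, fun τ hτ => hgexp τ hτ⟩)
    have h1 : Tendsto (fun τ:ℝ => lam*τ - lam*τ₀) atBot atBot := by
      simpa [sub_eq_add_neg] using
        tendsto_atBot_add_const_right atBot (-(lam*τ₀))
          (Tendsto.const_mul_atBot hlampos tendsto_id)
    have h2 := Real.tendsto_exp_atBot.comp h1
    have h3 := h2.const_mul η
    simpa using h3
  obtain ⟨sφ, hφtend⟩ : ∃ L, Tendsto (fun τ => Sp τ + (6/lam) * g τ) atBot (𝓝 L) := by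
    have hψmono : Monotone (fun τ => Sp (min τ τ₀) + (6/lam) * g (min τ τ₀)) := by
      intro a b hab
      exact hmφ2 (Set.mem_Iic.2 (min_le_right a τ₀)) (Set.mem_Iic.2 (min_le_right b τ₀))
        (min_le_min hab (le_refl _))
    have hbdd : BddBelow (Set.range (fun τ => Sp (min τ τ₀) + (6/lam) * g (min τ τ₀))) := by
      refine ⟨-1, ?_⟩
      rintro x ⟨τ, rfl⟩
      have h1 := (hSp11 (min τ τ₀)).1
      have h2 : 0 ≤ (6/lam) * g (min τ τ₀) := mul_nonneg (by positivity) (hg0 _)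
      simp only
      linarith
    have htd := tendsto_atBot_ciInf hψmono hbdd
    refine ⟨_, Tendsto.congr' ?_ htd⟩
    filter_upwards [eventually_le_atBot τ₀] with τ hτ
    rw [min_eq_left hτ]
  have hSptend : Tendsto Sp atBot (𝓝 sφ) := by
    have h1 := hφtend.sub (hgtend.const_mul (6/lam))
    simp only [mul_zero, sub_zero] at h1
    refine Tendsto.congr ?_ h1
    intro τ; ring
  have hAptend : Tendsto Ap atBot (𝓝 0) :=
    squeeze_zero' (Eventually.of_forall bb.con_Ap) (Eventually.of_forall hAg) hgtend
  have hNTtend : Tendsto (fun τ => NT κ Ap Np τ) atBot (𝓝 0) :=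
    squeeze_zero' (Eventually.of_forall bb.con_NT) (Eventually.of_forall hNg) hgtend
  have hOmtend : Tendsto (fun τ => OmF κ Sp St Ap Np τ) atBot (𝓝 0) :=
    squeeze_zero' (Eventually.of_forall hΩ0) (Eventually.of_forall hOg) hgtend
  have hSttend : Tendsto St atBot (𝓝 (1 - sφ^2)) := by
    have h1 : ∀ τ, St τ = 1 - (Sp τ)^2 - Ap τ - NT κ Ap Np τ - OmF κ Sp St Ap Np τ := by
      intro τ; simp only [OmF]; ring
    have h2 : Tendsto (fun τ => 1 - (Sp τ)^2 - Ap τ - NT κ Ap Np τ - OmF κ Sp St Ap Np τ)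
        atBot (𝓝 (1 - sφ^2 - 0 - 0 - 0)) :=
      (((tendsto_const_nhds.sub (hSptend.pow 2)).sub hAptend).sub hNTtend).sub hOmtend
    rw [show (1 - sφ^2 - 0 - 0 - 0 : ℝ) = 1 - sφ^2 by ring] at h2
    exact Tendsto.congr (fun τ => (h1 τ).symm) h2
  have hsqrt0 : Tendsto (fun y : ℝ => Real.sqrt y) (𝓝 0) (𝓝 0) :=
    Real.continuous_sqrt.tendsto' 0 0 (by simp)
  have hDltend : Tendsto Dl atBot (𝓝 0) := by
    apply squeeze_zero_norm' _ (hsqrt0.comp hNTtend)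
    refine Eventually.of_forall fun τ => ?_
    rw [Real.norm_eq_abs, ← Real.sqrt_sq_eq_abs]
    apply Real.sqrt_le_sqrt
    have h1 := bb.con_main τ
    have h2 := bb.con_St τ
    have h3 := bb.con_NT τ
    have h4 := bb.con_sum τ
    have h5 := bb.con_Ap τ
    have hSt1 : St τ ≤ 1 := by linarith [sq_nonneg (Sp τ)]
    have h6 : 0 ≤ (Sp τ)^2 * Ap τ := mul_nonneg (sq_nonneg _) h5
    have h7 : St τ * NT κ Ap Np τ ≤ 1 * NT κ Ap Np τ := mul_le_mul_of_nonneg_right hSt1 h3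
    show Dl τ^2 ≤ NT κ Ap Np τ
    linarith
  have hNptend : Tendsto Np atBot (𝓝 0) := by
    have hsum : Tendsto (fun τ => 3*NT κ Ap Np τ + |κ| * Ap τ) atBot (𝓝 0) := by
      have := (hNTtend.const_mul 3).add (hAptend.const_mul (|κ|))
      simpa using this
    apply squeeze_zero_norm' _ (hsqrt0.comp hsum)
    refine Eventually.of_forall fun τ => ?_
    rw [Real.norm_eq_abs, ← Real.sqrt_sq_eq_abs]
    apply Real.sqrt_le_sqrt
    have h1 : (Np τ)^2 = 3*NT κ Ap Np τ + κ*Ap τ := by simp only [NT]; ring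
    have h2 : κ*Ap τ ≤ |κ| * Ap τ := mul_le_mul_of_nonneg_right (le_abs_self κ) (bb.con_Ap τ)
    show Np τ^2 ≤ 3*NT κ Ap Np τ + |κ| * Ap τ
    linarith
  refine ⟨sφ, ⟨?_, ?_⟩, ?_, ?_⟩
  · exact ge_of_tendsto hSptend (Eventually.of_forall fun τ => (hSp11 τ).1)
  · exact le_of_tendsto hSptend (Eventually.of_forall fun τ => (hSp11 τ).2)
  · have habs : Tendsto (fun τ => |Sp τ - sb|) atBot (𝓝 (|sφ - sb|)) :=
      (hSptend.sub tendsto_const_nhds).abs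
    have h1 : |sφ - sb| ≤ δ₁ :=
      le_of_tendsto habs (eventually_atBot.2 ⟨τ₀, fun τ hτ => (hreg2 τ hτ).1⟩)
    linarith
  · show Tendsto (traj Sp St Dl Ap Np) atBot (𝓝 ((sφ, 1 - sφ^2, 0, 0, 0) : ℝ × ℝ × ℝ × ℝ × ℝ))
    have : traj Sp St Dl Ap Np = fun τ => (Sp τ, St τ, Dl τ, Ap τ, Np τ) := rfl
    rw [this]
    exact hSptend.prodMk_nhds (hSttend.prodMk_nhds (hDltend.prodMk_nhds
      (hAptend.prodMk_nhds hNptend)))
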